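/- arXiv:1312.0255 — 2 statements merged into one kernel-verified Lean document; each statement's English description precedes it below -/
import Mathlib

section
/- Let q be a real number with 0 < q < 1, let h be an integer with h ≥ 1, let x be a real number with x > 0, let s be a complex number, and let a be an odd positive integer. Then ζ_q^{(h)}(s, ax) = ([2]_q / ([2]_{q^a} · [a]_q^s)) · Σ_{i=0}^{a-1} (-1)^i · q^{ih} · ζ_{q^a}^{(h)}(s, x + i/a). -/
/-- The q-analogue of a real number `x`: `[x]_q = (1 - q^x)/(1 - q)`,
where `q^x` is a real power of the positive base `q`. -/
noncomputable def qnum (q x : ℝ) : ℝ := (1 - q ^ x) / (1 - q)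

/-- The (h,q)-Genocchi polynomial `G_m^{(h)}(x|q)`: `G_0^{(h)}(x|q) = 0` and for `m ≥ 1`,
`G_m^{(h)}(x|q) = m (1+q)/(1-q)^{m-1} ∑_{k=0}^{m-1} C(m-1,k) (-1)^k q^{kx}/(1+q^{h+k})`,
with real powers of the positive base `q`. -/
noncomputable def hqGenocchi (h : ℤ) (q : ℝ) (m : ℕ) (x : ℝ) : ℝ :=
  if m = 0 then 0
  else (m : ℝ) * (1 + q) / (1 - q) ^ (m - 1) *
    ∑ k ∈ Finset.range m, ((m - 1).choose k : ℝ) * (-1 : ℝ) ^ k *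
      q ^ ((k : ℝ) * x) / (1 + q ^ ((h : ℝ) + (k : ℝ)))

/-- The (h,q)-zeta function `ζ_q^{(h)}(s,x) = (1+q) ∑_{m=0}^∞ (-1)^m q^{mh} [m+x]_q^{-s}`,
where the power with complex exponent is a complex power of the positive real base. -/
noncomputable def hqZeta (h : ℤ) (q : ℝ) (s : ℂ) (x : ℝ) : ℂ :=
  (1 + (q : ℂ)) * ∑' m : ℕ, (-1 : ℂ) ^ m * ((q ^ ((m : ℝ) * (h : ℝ)) : ℝ) : ℂ) *
    ((qnum q ((m : ℝ) + x) : ℝ) : ℂ) ^ (-s)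

lemma qnum_pos {q : ℝ} (hq0 : 0 < q) (hq1 : q < 1) {x : ℝ} (hx : 0 < x) :
    0 < qnum q x := by
  have h1 : q ^ x < 1 := Real.rpow_lt_one hq0.le hq1 hx
  exact div_pos (by linarith) (by linarith)

lemma qnum_mono {q : ℝ} (hq0 : 0 < q) (hq1 : q < 1) {x y : ℝ} (hxy : x ≤ y) :
    qnum q x ≤ qnum q y := by
  have h1 : q ^ y ≤ q ^ x := Real.rpow_le_rpow_of_exponent_ge hq0 hq1.le hxy
  unfold qnum
  rw [div_le_div_iff_of_pos_right (by linarith)]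
  linarith

lemma qnum_le {q : ℝ} (hq0 : 0 < q) (hq1 : q < 1) (x : ℝ) :
    qnum q x ≤ 1 / (1 - q) := by
  have h1 : 0 < q ^ x := Real.rpow_pos_of_pos hq0 x
  unfold qnum
  rw [div_le_div_iff_of_pos_right (by linarith)]
  linarith

set_option maxHeartbeats 1000000 in
lemma summable_aux (Q : ℝ) (hQ0 : 0 < Q) (hQ1 : Q < 1) (h : ℤ) (hh : 1 ≤ h)
    (y : ℝ) (hy : 0 < y) (s : ℂ) :
    Summable (fun n : ℕ => (-1 : ℂ) ^ n * ((Q ^ ((n : ℝ) * (h : ℝ)) : ℝ) : ℂ) *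
      ((qnum Q ((n : ℝ) + y) : ℝ) : ℂ) ^ (-s)) := by
  set t : ℝ := (-s).re with ht
  set C : ℝ := max ((qnum Q y) ^ t) ((1 / (1 - Q)) ^ t) with hC
  have hr0 : (0:ℝ) ≤ Q ^ (h : ℝ) := Real.rpow_nonneg hQ0.le _
  have hr1 : Q ^ (h : ℝ) < 1 := Real.rpow_lt_one hQ0.le hQ1 (by exact_mod_cast lt_of_lt_of_le zero_lt_one hh)
  apply Summable.of_norm
  refine Summable.of_nonneg_of_le (fun n => norm_nonneg _) ?_
    ((summable_geometric_of_lt_one hr0 hr1).mul_left C)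
  · intro n
    have hρ0 : 0 < qnum Q ((n : ℝ) + y) :=
      qnum_pos hQ0 hQ1 (by positivity)
    have hQnh : 0 < Q ^ ((n : ℝ) * (h : ℝ)) := Real.rpow_pos_of_pos hQ0 _
    rw [norm_mul, norm_mul, norm_pow, norm_neg, norm_one, one_pow, one_mul,
      Complex.norm_real, Real.norm_eq_abs,
      Complex.norm_cpow_eq_rpow_re_of_pos hρ0, abs_of_pos hQnh, ← ht]
    have h1 : Q ^ ((n : ℝ) * (h : ℝ)) = (Q ^ (h : ℝ)) ^ n := by
      rw [mul_comm, Real.rpow_mul hQ0.le, Real.rpow_natCast]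
    have h2 : (qnum Q ((n : ℝ) + y)) ^ t ≤ C := by
      rcases le_or_gt 0 t with h3 | h3
      · exact le_trans (Real.rpow_le_rpow hρ0.le (qnum_le hQ0 hQ1 _) h3) (le_max_right _ _)
      · exact le_trans (Real.rpow_le_rpow_of_nonpos (qnum_pos hQ0 hQ1 hy)
          (qnum_mono hQ0 hQ1 (le_add_of_nonneg_left (Nat.cast_nonneg n))) h3.le) (le_max_left _ _)
    rw [h1]
    calc (Q ^ (h : ℝ)) ^ n * (qnum Q ((n : ℝ) + y)) ^ t
        ≤ (Q ^ (h : ℝ)) ^ n * C := by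
          exact mul_le_mul_of_nonneg_left h2 (by positivity)
      _ = C * (Q ^ (h : ℝ)) ^ n := mul_comm _ _

lemma qnum_mul {q : ℝ} (hq0 : 0 < q) (hq1 : q < 1) (a : ℕ) (ha : 0 < a) (z : ℝ) :
    qnum q ((a:ℝ) * z) = qnum q (a:ℝ) * qnum (q ^ a) z := by
  have h1 : q ^ a < 1 := pow_lt_one₀ hq0.le hq1 ha.ne'
  unfold qnum
  rw [Real.rpow_mul hq0.le, Real.rpow_natCast]
  have h2 : (1 : ℝ) - q ≠ 0 := by linarith
  have h3 : (1 : ℝ) - q ^ a ≠ 0 := by linarith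
  field_simp

set_option maxHeartbeats 1600000 in
theorem statement11 (q : ℝ) (hq0 : 0 < q) (hq1 : q < 1) (h : ℤ) (hh : 1 ≤ h)
    (x : ℝ) (hx : 0 < x) (s : ℂ) (a : ℕ) (ha : 0 < a) (hao : Odd a) :
    hqZeta h q s ((a : ℝ) * x) =
      ((1 + q : ℝ) : ℂ) / (((1 + q ^ a : ℝ) : ℂ) * ((qnum q a : ℝ) : ℂ) ^ s) *
        ∑ i ∈ Finset.range a, (-1 : ℂ) ^ i * ((q ^ ((i : ℝ) * (h : ℝ)) : ℝ) : ℂ) *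
          hqZeta h (q ^ a) s (x + (i : ℝ) / (a : ℝ)) := by
  have haR : (0:ℝ) < (a:ℝ) := Nat.cast_pos.mpr ha
  have : NeZero a := ⟨ha.ne'⟩
  have hQa0 : 0 < q ^ a := pow_pos hq0 a
  have hQa1 : q ^ a < 1 := pow_lt_one₀ hq0.le hq1 ha.ne'
  have hA0 : 0 < qnum q (a:ℝ) := qnum_pos hq0 hq1 haR
  set f : ℕ → ℂ := fun m => (-1 : ℂ) ^ m * ((q ^ ((m : ℝ) * (h : ℝ)) : ℝ) : ℂ) *
    ((qnum q ((m : ℝ) + (a:ℝ) * x) : ℝ) : ℂ) ^ (-s) with hfdef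
  set g : ℕ → ℕ → ℂ := fun i n => (-1 : ℂ) ^ n * (((q ^ a) ^ ((n : ℝ) * (h : ℝ)) : ℝ) : ℂ) *
    ((qnum (q ^ a) ((n : ℝ) + (x + (i : ℝ) / (a : ℝ))) : ℝ) : ℂ) ^ (-s) with hgdef
  have lhs_eq : hqZeta h q s ((a:ℝ) * x) = (1 + (q:ℂ)) * ∑' m, f m := rfl
  have rhs_zeta : ∀ i : ℕ, hqZeta h (q ^ a) s (x + (i:ℝ)/(a:ℝ)) =
      (1 + ((q ^ a : ℝ):ℂ)) * ∑' n, g i n := fun i => rfl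
  have hgs : ∀ i : ℕ, Summable (g i) := fun i =>
    summable_aux _ hQa0 hQa1 h hh _ (by positivity) s
  have hfs : Summable f :=
    summable_aux _ hq0 hq1 h hh _ (by positivity) s
  have key : ∀ (n : ℕ) (i : Fin a), f (n * a + (i:ℕ)) =
      ((qnum q (a:ℝ) : ℝ) : ℂ) ^ (-s) *
        ((-1:ℂ) ^ (i:ℕ) * ((q ^ (((i:ℕ):ℝ) * (h:ℝ)) : ℝ):ℂ) * g (i:ℕ) n) := by
    intro n i
    have e1 : (-1 : ℂ) ^ (n * a + (i:ℕ)) = (-1:ℂ) ^ n * (-1:ℂ) ^ (i:ℕ) := by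
      rw [pow_add, mul_comm n a, pow_mul, hao.neg_one_pow]
    have e2 : (q : ℝ) ^ ((((n * a + (i:ℕ) : ℕ)) : ℝ) * (h : ℝ)) =
        (q ^ a : ℝ) ^ ((n : ℝ) * (h : ℝ)) * q ^ (((i:ℕ) : ℝ) * (h : ℝ)) := by
      rw [← Real.rpow_natCast q a, ← Real.rpow_mul hq0.le, ← Real.rpow_add hq0]
      congr 1
      push_cast
      ring
    have e3 : ((n * a + (i:ℕ) : ℕ) : ℝ) + (a:ℝ) * x
        = (a:ℝ) * ((n:ℝ) + (x + ((i:ℕ):ℝ)/(a:ℝ))) := by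
      push_cast
      field_simp
      ring
    have hB0 : 0 < qnum (q ^ a) ((n:ℝ) + (x + ((i:ℕ):ℝ)/(a:ℝ))) :=
      qnum_pos hQa0 hQa1 (by positivity)
    have e4 : ((qnum q (((n * a + (i:ℕ) : ℕ) : ℝ) + (a:ℝ) * x) : ℝ) : ℂ) ^ (-s)
        = ((qnum q (a:ℝ) : ℝ):ℂ) ^ (-s) *
          ((qnum (q ^ a) ((n:ℝ) + (x + ((i:ℕ):ℝ)/(a:ℝ))) : ℝ):ℂ) ^ (-s) := by
      rw [e3, qnum_mul hq0 hq1 a ha, Complex.ofReal_mul]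
      exact Complex.mul_cpow_ofReal_nonneg hA0.le hB0.le _
    simp only [hfdef, hgdef]
    rw [e1, e2, e4, Complex.ofReal_mul]
    ring
  have hsumP : Summable (fun p : ℕ × Fin a => f (p.1 * a + (p.2:ℕ))) :=
    (Equiv.summable_iff (Nat.divModEquiv a).symm).mpr hfs
  have e5 : ∑' m, f m = ∑ i ∈ Finset.range a,
      ((qnum q (a:ℝ) : ℝ):ℂ) ^ (-s) *
        ((-1:ℂ)^i * ((q ^ ((i:ℝ)*(h:ℝ)) : ℝ):ℂ) * ∑' n, g i n) := by
    calc ∑' m, f m = ∑' p : ℕ × Fin a, f (p.1 * a + (p.2:ℕ)) := by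
          rw [← Equiv.tsum_eq (Nat.divModEquiv a).symm f]
          simp only [Nat.divModEquiv_symm_apply]
      _ = ∑' n : ℕ, ∑' i : Fin a, f (n * a + (i:ℕ)) :=
          Summable.tsum_prod' hsumP (fun n => Summable.of_finite)
      _ = ∑' n : ℕ, ∑ i : Fin a, ((qnum q (a:ℝ) : ℝ):ℂ) ^ (-s) *
            ((-1:ℂ) ^ (i:ℕ) * ((q ^ (((i:ℕ):ℝ) * (h:ℝ)) : ℝ):ℂ) * g (i:ℕ) n) := by
          congr 1
          funext n
          rw [tsum_fintype]
          exact Finset.sum_congr rfl fun i _ => key n i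
      _ = ∑ i : Fin a, ∑' n : ℕ, ((qnum q (a:ℝ) : ℝ):ℂ) ^ (-s) *
            ((-1:ℂ) ^ (i:ℕ) * ((q ^ (((i:ℕ):ℝ) * (h:ℝ)) : ℝ):ℂ) * g (i:ℕ) n) :=
          Summable.tsum_finsetSum (fun i _ => ((hgs i).mul_left _).mul_left _)
      _ = ∑ i : Fin a, ((qnum q (a:ℝ) : ℝ):ℂ) ^ (-s) *
            ((-1:ℂ) ^ (i:ℕ) * ((q ^ (((i:ℕ):ℝ) * (h:ℝ)) : ℝ):ℂ) * ∑' n, g (i:ℕ) n) := by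
          refine Finset.sum_congr rfl fun i _ => ?_
          rw [tsum_mul_left, tsum_mul_left]
      _ = _ := Fin.sum_univ_eq_sum_range
            (fun i => ((qnum q (a:ℝ) : ℝ):ℂ) ^ (-s) *
              ((-1:ℂ) ^ i * ((q ^ ((i:ℝ) * (h:ℝ)) : ℝ):ℂ) * ∑' n, g i n)) a
  rw [lhs_eq, e5, Finset.mul_sum, Finset.mul_sum]
  refine Finset.sum_congr rfl fun i hi => ?_
  rw [rhs_zeta i]
  have h1 : ((1 + q ^ a : ℝ) : ℂ) ≠ 0 := Complex.ofReal_ne_zero.mpr (by positivity)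
  have h2 : ((qnum q (a:ℝ) : ℝ):ℂ) ^ s ≠ 0 := by
    intro hcon
    have h3 := Complex.norm_cpow_eq_rpow_re_of_pos hA0 s
    rw [hcon] at h3
    simp only [norm_zero] at h3
    exact (Real.rpow_pos_of_pos hA0 s.re).ne' h3.symm
  have h1' : (1 : ℂ) + (q:ℂ) ^ a ≠ 0 := by
    have h4 := h1
    push_cast at h4
    exact h4
  rw [Complex.cpow_neg]
  push_cast
  field_simp
end

section
/- Let q be a real number with 0 < q < 1, let h be an integer with h ≥ 1, let x be a real number with x > 0, let m be a natural number, and let a, b be odd positive integers. Then [2]_{q^b} · Σ_{i=0}^{m} binom(m,i) · [a]_q^{i-1} · [b]_q^{m-i} · G_i^{(h)}(bx | q^a) · S_{m-i; q^b}^{(h+i-1)}(a) = [2]_{q^a} · Σ_{i=0}^{m} binom(m,i) · [b]_q^{i-1} · [a]_q^{m-i} · G_i^{(h)}(ax | q^b) · S_{m-i; q^a}^{(h+i-1)}(b), where S_{m;q}^{(i)}(a) := Σ_{j=0}^{a-1} (-1)^j · q^{ji} · [j]_q^{m}. -/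
/-- The alternating power sum `S_{m;q}^{(i)}(a) = ∑_{j=0}^{a-1} (-1)^j q^{ji} [j]_q^m`. -/
noncomputable def altPowSum (q : ℝ) (i : ℤ) (m : ℕ) (a : ℕ) : ℝ :=
  ∑ j ∈ Finset.range a, (-1 : ℝ) ^ j * q ^ ((j : ℝ) * (i : ℝ)) * (qnum q j) ^ m

open Finset


private lemma tri_swap (N : ℕ) (t : ℕ → ℕ → ℝ) :
    ∑ i ∈ range (N+1), ∑ j ∈ range (N-i+1), t i j
      = ∑ j ∈ range (N+1), ∑ i ∈ range (N-j+1), t i j := by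
  have key : ∀ (u : ℕ → ℕ → ℝ), ∑ i ∈ range (N+1), ∑ j ∈ range (N-i+1), u i j
      = ∑ i ∈ range (N+1), ∑ j ∈ range (N+1), if i + j ≤ N then u i j else 0 := by
    intro u
    refine sum_congr rfl fun i hi => ?_
    rw [mem_range] at hi
    have hsub : range (N-i+1) ⊆ range (N+1) := by
      intro j hj; rw [mem_range] at hj ⊢; omega
    have hzero : ∀ j ∈ range (N+1), j ∉ range (N-i+1) →
        (if i + j ≤ N then u i j else 0) = 0 := by
      intro j hj hj2; rw [mem_range] at hj; rw [mem_range, not_lt] at hj2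
      rw [if_neg (by omega)]
    rw [← Finset.sum_subset hsub hzero]
    refine sum_congr rfl fun j hj => ?_
    rw [mem_range] at hj
    rw [if_pos (by omega)]
  rw [key, key, Finset.sum_comm]
  refine sum_congr rfl fun j _ => sum_congr rfl fun i _ => by rw [add_comm]

private lemma diag_swap (N : ℕ) (w : ℕ → ℕ → ℝ) :
    ∑ i ∈ range (N+1), ∑ l ∈ range (N-i+1), w i l
      = ∑ s ∈ range (N+1), ∑ l ∈ range (s+1), w (s-l) l := by
  calc ∑ i ∈ range (N+1), ∑ l ∈ range (N-i+1), w i l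
      = ∑ l ∈ range (N+1), ∑ i ∈ range (N-l+1), w i l := tri_swap N w
    _ = ∑ l ∈ range (N+1), ∑ i ∈ range (N-l+1), w (N-l-i) l := by
        refine sum_congr rfl fun l hl => ?_
        rw [← Finset.sum_range_reflect (fun i => w i l) (N-l+1)]
        refine sum_congr rfl fun i hi => ?_
        rw [mem_range] at hi
        have h : N-l+1-1-i = N-l-i := by omega
        rw [h]
    _ = ∑ s ∈ range (N+1), ∑ l ∈ range (N-s+1), w (N-l-s) l :=
        tri_swap N (fun l i => w (N-l-i) l)
    _ = ∑ s ∈ range (N+1), ∑ l ∈ range (N-s+1), w (N-s-l) l := by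
        refine sum_congr rfl fun s _ => sum_congr rfl fun l _ => ?_
        have h : N-l-s = N-s-l := by omega
        rw [h]
    _ = ∑ s ∈ range (N+1), ∑ l ∈ range (s+1), w (s-l) l := by
        rw [← Finset.sum_range_reflect (fun s => ∑ l ∈ range (s+1), w (s-l) l) (N+1)]
        refine sum_congr rfl fun s hs => ?_
        rw [mem_range] at hs
        have h1 : N+1-1-s = N-s := by omega
        simp only [h1]

private lemma alt_choose_sum (s : ℕ) :
    ∑ l ∈ range (s+1), (-1:ℝ)^l * (s.choose l : ℝ) = if s = 0 then 1 else 0 := by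
  rcases Nat.eq_zero_or_pos s with rfl | hs
  · simp
  · rw [if_neg (by omega)]
    have := Int.alternating_sum_range_choose_of_ne (n := s) (by omega)
    have h2 : ((∑ m ∈ range (s+1), ((-1)^m * s.choose m : ℤ)) : ℝ) = 0 := by
      exact_mod_cast this
    push_cast at h2
    exact h2

private lemma Bprime (M : ℕ) (F : ℕ → ℝ) :
    ∑ i ∈ range (M+1), (M.choose i : ℝ) *
      ∑ l ∈ range (M-i+1), ((M-i).choose l : ℝ) * (-1)^l * F (i+l) = F 0 := by
  have step1 : ∑ i ∈ range (M+1), (M.choose i : ℝ) *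
      ∑ l ∈ range (M-i+1), ((M-i).choose l : ℝ) * (-1)^l * F (i+l)
      = ∑ i ∈ range (M+1), ∑ l ∈ range (M-i+1),
          (fun i l => ((M.choose (i+l) : ℝ) * ((i+l).choose i : ℝ)) * (-1)^l * F (i+l)) i l := by
    refine sum_congr rfl fun i hi => ?_
    rw [Finset.mul_sum]
    refine sum_congr rfl fun l hl => ?_
    rw [mem_range] at hi hl
    simp only []
    have hc : M.choose (i+l) * (i+l).choose i = M.choose i * (M-i).choose l := by
      have := Nat.choose_mul (n := M) (k := i+l) (s := i) (by omega)
      simpa using this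
    have hcc : ((M.choose (i+l) : ℝ) * ((i+l).choose i : ℝ))
        = (M.choose i : ℝ) * ((M-i).choose l : ℝ) := by exact_mod_cast hc
    rw [hcc]; ring
  rw [step1, diag_swap M]
  have step2 : ∀ s ∈ range (M+1), (∑ l ∈ range (s+1),
      (fun i l => ((M.choose (i+l) : ℝ) * ((i+l).choose i : ℝ)) * (-1)^l * F (i+l)) (s-l) l)
      = (M.choose s : ℝ) * F s * ∑ l ∈ range (s+1), (-1:ℝ)^l * (s.choose l : ℝ) := by
    intro s hs
    rw [Finset.mul_sum]
    refine sum_congr rfl fun l hl => ?_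
    rw [mem_range] at hl
    simp only []
    have hsl : (s-l)+l = s := by omega
    rw [hsl]
    have hcs : (s.choose (s-l) : ℝ) = (s.choose l : ℝ) := by
      exact_mod_cast congrArg (Nat.cast (R := ℝ)) (Nat.choose_symm (show l ≤ s by omega))
    rw [hcs]; ring
  rw [sum_congr rfl step2, Finset.sum_eq_single 0]
  · simp [alt_choose_sum]
  · intro s hs hs0
    rw [alt_choose_sum, if_neg hs0, mul_zero]
  · intro hm; simp at hm

private lemma lemB (n : ℕ) (f g : ℕ → ℝ) :
    ∑ i ∈ range (n+1), (n.choose i : ℝ) * (∑ k ∈ range (i+1), (i.choose k : ℝ) * g k) *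
      (∑ l ∈ range (n-i+1), ((n-i).choose l : ℝ) * (-1)^l * f (i+l))
    = ∑ k ∈ range (n+1), (n.choose k : ℝ) * g k * f k := by
  have expand : ∑ i ∈ range (n+1), (n.choose i : ℝ) * (∑ k ∈ range (i+1), (i.choose k : ℝ) * g k) *
      (∑ l ∈ range (n-i+1), ((n-i).choose l : ℝ) * (-1)^l * f (i+l))
      = ∑ i ∈ range (n+1), ∑ k ∈ range (i+1),
          (fun i k => (n.choose i : ℝ) * (i.choose k : ℝ) * g k *
            (∑ l ∈ range (n-i+1), ((n-i).choose l : ℝ) * (-1)^l * f (i+l))) i k := by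
    refine sum_congr rfl fun i _ => ?_
    simp only [Finset.mul_sum, Finset.sum_mul]
    rw [Finset.sum_comm]
    refine sum_congr rfl fun k _ => sum_congr rfl fun l _ => by ring
  rw [expand]
  set v : ℕ → ℕ → ℝ := fun i k => (n.choose i : ℝ) * (i.choose k : ℝ) * g k *
      (∑ l ∈ range (n-i+1), ((n-i).choose l : ℝ) * (-1)^l * f (i+l)) with hv
  have swap : ∑ i ∈ range (n+1), ∑ k ∈ range (i+1), v i k
      = ∑ k ∈ range (n+1), ∑ d ∈ range (n-k+1), v (k+d) k := by
    have hd := diag_swap n (fun d k => v (d+k) k)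
    have hd2 : ∑ s ∈ range (n+1), ∑ k ∈ range (s+1), (fun d k => v (d+k) k) (s-k) k
        = ∑ s ∈ range (n+1), ∑ k ∈ range (s+1), v s k := by
      refine sum_congr rfl fun s hs => sum_congr rfl fun k hk => ?_
      rw [mem_range] at hk
      have h : (s-k)+k = s := by omega
      simp only [h]
    rw [← hd2, ← hd, tri_swap]
    refine sum_congr rfl fun k _ => sum_congr rfl fun d _ => ?_
    rw [add_comm d k]
  rw [swap]
  refine sum_congr rfl fun k hk => ?_
  rw [mem_range] at hk
  have inner : ∀ d ∈ range (n-k+1), v (k+d) k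
      = (n.choose k : ℝ) * g k * (((n-k).choose d : ℝ) *
          (∑ l ∈ range ((n-k)-d+1), (((n-k)-d).choose l : ℝ) * (-1)^l * (fun j => f (k+j)) (d+l))) := by
    intro d hd
    rw [mem_range] at hd
    rw [hv]
    simp only []
    have hc : n.choose (k+d) * (k+d).choose k = n.choose k * (n-k).choose d := by
      have := Nat.choose_mul (n := n) (k := k+d) (s := k) (by omega)
      simpa using this
    have hcc : ((n.choose (k+d) : ℝ) * ((k+d).choose k : ℝ))
        = (n.choose k : ℝ) * ((n-k).choose d : ℝ) := by exact_mod_cast hc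
    have hnn : n-(k+d) = (n-k)-d := by omega
    have hsum : (∑ l ∈ range (n-(k+d)+1), ((n-(k+d)).choose l : ℝ) * (-1)^l * f ((k+d)+l))
        = ∑ l ∈ range ((n-k)-d+1), (((n-k)-d).choose l : ℝ) * (-1)^l * f (k+(d+l)) := by
      rw [hnn]
      exact sum_congr rfl fun l _ => by rw [add_assoc]
    rw [hsum, mul_comm ((n.choose (k+d) : ℝ)) (((k+d).choose k : ℝ)), mul_comm (((k+d).choose k : ℝ)) ((n.choose (k+d) : ℝ)), hcc]
    ring
  rw [sum_congr rfl inner, ← Finset.mul_sum, Bprime (n-k) (fun j => f (k+j))]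
  simp
private lemma pow_rpow_nat (q : ℝ) (hq : 0 ≤ q) (a : ℕ) (y : ℝ) :
    (q^a : ℝ) ^ y = q ^ ((a:ℝ) * y) := by
  rw [← Real.rpow_natCast q a, ← Real.rpow_mul hq]

private lemma geom_alt (Q : ℝ) (hQ : 0 < Q) (c : ℝ) {a : ℕ} (hao : Odd a) :
    ∑ j ∈ range a, (-1:ℝ)^j * Q ^ ((j:ℝ) * c) = (1 + Q ^ ((a:ℝ)*c)) / (1 + Q ^ c) := by
  have hterm : ∀ j : ℕ, (-1:ℝ)^j * Q ^ ((j:ℝ) * c) = (-(Q^c))^j := by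
    intro j
    rw [neg_pow (Q^c) j, ← Real.rpow_natCast (Q^c) j, ← Real.rpow_mul hQ.le, mul_comm c (j:ℝ)]
  rw [sum_congr rfl (fun j _ => hterm j)]
  have hpos := Real.rpow_pos_of_pos hQ c
  have hne : (-(Q^c)) ≠ 1 := by linarith
  rw [geom_sum_eq hne]
  have hodd : (-(Q^c))^a = -(Q^((a:ℝ)*c)) := by
    rw [hao.neg_pow]
    congr 1
    rw [← Real.rpow_natCast (Q^c) a, ← Real.rpow_mul hQ.le, mul_comm c (a:ℝ)]
  rw [hodd]
  have h1 : -(Q^((a:ℝ)*c)) - 1 = -(1 + Q^((a:ℝ)*c)) := by ring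
  have h2 : -(Q^c) - 1 = -(1 + Q^c) := by ring
  rw [h1, h2, neg_div_neg_eq]

private lemma altPow_closed (Q : ℝ) (hQ0 : 0 < Q) (c : ℤ) (M : ℕ) {a : ℕ} (hao : Odd a) :
    altPowSum Q c M a = (∑ l ∈ range (M+1), (M.choose l : ℝ) * (-1:ℝ)^l *
      ((1 + Q ^ ((a:ℝ)*((c:ℝ)+(l:ℝ)))) / (1 + Q ^ ((c:ℝ)+(l:ℝ))))) / (1-Q)^M := by
  unfold altPowSum qnum
  calc ∑ j ∈ range a, (-1:ℝ)^j * Q ^ ((j:ℝ)*(c:ℝ)) * ((1 - Q^((j:ℝ)))/(1-Q))^M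
      = ∑ j ∈ range a, ∑ l ∈ range (M+1),
          (M.choose l : ℝ) * (-1:ℝ)^l * ((-1:ℝ)^j * Q^((j:ℝ)*((c:ℝ)+(l:ℝ)))) / (1-Q)^M := by
        refine sum_congr rfl fun j _ => ?_
        rw [div_pow]
        have hb : (1 - Q^((j:ℝ)))^M
            = ∑ l ∈ range (M+1), (-(Q^((j:ℝ))))^l * (1:ℝ)^(M-l) * (M.choose l : ℝ) := by
          rw [sub_eq_neg_add, add_pow]
        rw [hb, Finset.sum_div, Finset.mul_sum]
        refine sum_congr rfl fun l _ => ?_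
        have hneg : (-(Q^((j:ℝ))))^l = (-1:ℝ)^l * Q^((j:ℝ)*(l:ℝ)) := by
          rw [neg_pow (Q^((j:ℝ))) l, ← Real.rpow_natCast (Q^((j:ℝ))) l, ← Real.rpow_mul hQ0.le]
        have hQQ : Q^((j:ℝ)*(c:ℝ)) * Q^((j:ℝ)*(l:ℝ)) = Q^((j:ℝ)*((c:ℝ)+(l:ℝ))) := by
          rw [← Real.rpow_add hQ0]
          congr 1
          ring
        rw [hneg, one_pow, ← hQQ]
        ring
    _ = ∑ l ∈ range (M+1), ∑ j ∈ range a,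
          (M.choose l : ℝ) * (-1:ℝ)^l * ((-1:ℝ)^j * Q^((j:ℝ)*((c:ℝ)+(l:ℝ)))) / (1-Q)^M :=
        Finset.sum_comm
    _ = ∑ l ∈ range (M+1), (M.choose l : ℝ) * (-1:ℝ)^l *
          ((1 + Q ^ ((a:ℝ)*((c:ℝ)+(l:ℝ)))) / (1 + Q ^ ((c:ℝ)+(l:ℝ)))) / (1-Q)^M := by
        refine sum_congr rfl fun l _ => ?_
        rw [← Finset.sum_div, ← Finset.mul_sum, geom_alt Q hQ0 ((c:ℝ)+(l:ℝ)) hao]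
    _ = (∑ l ∈ range (M+1), (M.choose l : ℝ) * (-1:ℝ)^l *
          ((1 + Q ^ ((a:ℝ)*((c:ℝ)+(l:ℝ)))) / (1 + Q ^ ((c:ℝ)+(l:ℝ))))) / (1-Q)^M := by
        rw [Finset.sum_div]

private noncomputable def gg (q A B H x : ℝ) (k : ℕ) : ℝ :=
  (-1:ℝ)^k * q ^ (A*B*(k:ℝ)*x) / (1 + q ^ (A*(H+(k:ℝ))))

private noncomputable def ff (q A B H : ℝ) (j : ℕ) : ℝ :=
  (1 + q ^ (A*B*(H+(j:ℝ)))) / (1 + q ^ (B*(H+(j:ℝ))))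

private lemma term_eq (q : ℝ) (hq0 : 0 < q) (hq1 : q < 1) (h : ℤ) (x : ℝ) (n : ℕ)
    (a b : ℕ) (ha : 0 < a) (hb : 0 < b) (hao : Odd a) (i : ℕ) (hi : i ≤ n) :
    ((n+1).choose (i+1) : ℝ) * (qnum q a) ^ (((i+1:ℕ) : ℤ) - 1) *
      (qnum q b) ^ (n+1 - (i+1)) * hqGenocchi h (q ^ a) (i+1) ((b : ℝ) * x) *
      altPowSum (q ^ b) (h + ((i+1:ℕ) : ℤ) - 1) (n+1 - (i+1)) a
    = ((n:ℝ)+1) * (1 + q^a) / (1-q)^n *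
      ((n.choose i : ℝ) * (∑ k ∈ range (i+1), (i.choose k : ℝ) * gg q a b (h:ℝ) x k) *
       (∑ l ∈ range (n-i+1), ((n-i).choose l : ℝ) * (-1:ℝ)^l * ff q a b (h:ℝ) (i+l))) := by
  have hz : ((i+1:ℕ) : ℤ) - 1 = (i:ℤ) := by push_cast; ring
  have hzc : h + ((i+1:ℕ) : ℤ) - 1 = h + (i:ℤ) := by push_cast; ring
  rw [hz, hzc, zpow_natCast]
  simp only [Nat.succ_sub_succ]
  rw [altPow_closed (q^b) (pow_pos hq0 b) (h + (i:ℤ)) (n-i) hao]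
  unfold hqGenocchi
  rw [if_neg (Nat.succ_ne_zero i)]
  simp only [Nat.add_sub_cancel]
  have hqa : qnum q (a:ℝ) = (1 - q^a)/(1-q) := by unfold qnum; rw [Real.rpow_natCast]
  have hqb : qnum q (b:ℝ) = (1 - q^b)/(1-q) := by unfold qnum; rw [Real.rpow_natCast]
  rw [hqa, hqb]
  have hSk : ∑ k ∈ range (i+1), (i.choose k : ℝ) * (-1:ℝ)^k *
      (q^a) ^ ((k:ℝ) * ((b:ℝ)*x)) / (1 + (q^a) ^ ((h:ℝ) + (k:ℝ)))
      = ∑ k ∈ range (i+1), (i.choose k : ℝ) * gg q a b (h:ℝ) x k := by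
    refine sum_congr rfl fun k _ => ?_
    unfold gg
    rw [pow_rpow_nat q hq0.le a, pow_rpow_nat q hq0.le a,
      show (a:ℝ)*((k:ℝ)*((b:ℝ)*x)) = (a:ℝ)*(b:ℝ)*(k:ℝ)*x by ring]
    ring
  rw [hSk]
  have hSl : ∑ l ∈ range (n-i+1), ((n-i).choose l : ℝ) * (-1:ℝ)^l *
      ((1 + (q^b) ^ ((a:ℝ)*((↑(h + (i:ℤ)):ℝ)+(l:ℝ)))) / (1 + (q^b) ^ ((↑(h + (i:ℤ)):ℝ)+(l:ℝ))))
      = ∑ l ∈ range (n-i+1), ((n-i).choose l : ℝ) * (-1:ℝ)^l * ff q a b (h:ℝ) (i+l) := by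
    refine sum_congr rfl fun l _ => ?_
    unfold ff
    rw [pow_rpow_nat q hq0.le b, pow_rpow_nat q hq0.le b,
      show (b:ℝ)*((a:ℝ)*((↑(h + (i:ℤ)):ℝ)+(l:ℝ))) = (a:ℝ)*(b:ℝ)*((h:ℝ)+((i+l : ℕ):ℝ)) by
        push_cast; ring,
      show (b:ℝ)*((↑(h + (i:ℤ)):ℝ)+(l:ℝ)) = (b:ℝ)*((h:ℝ)+((i+l : ℕ):ℝ)) by push_cast; ring]
  rw [hSl]
  -- now pure field algebra
  obtain ⟨jj, rfl⟩ : ∃ jj, n = i + jj := ⟨n - i, by omega⟩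
  simp only [Nat.add_sub_cancel_left]
  have hC : (((i+jj)+1).choose (i+1) : ℝ) = ((i:ℝ)+(jj:ℝ)+1) * ((i+jj).choose i : ℝ) / ((i:ℝ)+1) := by
    rw [eq_div_iff (by positivity)]
    have := Nat.add_one_mul_choose_eq (i+jj) i
    have h2 : (((i+jj)+1) * ((i+jj).choose i) : ℕ) = (((i+jj)+1).choose (i+1)) * (i+1) := by
      simpa [Nat.succ_eq_add_one] using this
    have h3 : ((((i+jj)+1) * ((i+jj).choose i) : ℕ) : ℝ) = ((((i+jj)+1).choose (i+1)) * (i+1) : ℕ) := by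
      exact_mod_cast congrArg (Nat.cast (R := ℝ)) h2
    push_cast at h3
    linarith
  rw [hC]
  have hq1' : (1:ℝ) - q ≠ 0 := by nlinarith
  have hqa1 : (1:ℝ) - q^a ≠ 0 := by
    have : q^a < 1 := pow_lt_one₀ hq0.le hq1 (by omega)
    nlinarith
  have hqb1 : (1:ℝ) - q^b ≠ 0 := by
    have : q^b < 1 := pow_lt_one₀ hq0.le hq1 (by omega)
    nlinarith
  have hi1 : ((i:ℝ)+1) ≠ 0 := by positivity
  rw [div_pow, div_pow]
  field_simp
  push_cast
  ring

private lemma oneSide (q : ℝ) (hq0 : 0 < q) (hq1 : q < 1) (h : ℤ) (x : ℝ) (m : ℕ)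
    (a b : ℕ) (ha : 0 < a) (hb : 0 < b) (hao : Odd a) :
    (1 + q ^ b) *
        ∑ i ∈ Finset.range (m + 1), (m.choose i : ℝ) * (qnum q a) ^ ((i : ℤ) - 1) *
          (qnum q b) ^ (m - i) * hqGenocchi h (q ^ a) i ((b : ℝ) * x) *
          altPowSum (q ^ b) (h + (i : ℤ) - 1) (m - i) a
    = (1 + q^a) * (1 + q^b) * (m:ℝ) / (1-q)^(m-1) *
      ∑ k ∈ range m, ((m-1).choose k : ℝ) * gg q a b (h:ℝ) x k * ff q a b (h:ℝ) k := by
  rcases Nat.eq_zero_or_pos m with rfl | hm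
  · simp [hqGenocchi]
  obtain ⟨n, rfl⟩ : ∃ n, m = n + 1 := ⟨m-1, by omega⟩
  rw [Finset.sum_range_succ']
  have h0 : hqGenocchi h (q^a) 0 ((b:ℝ)*x) = 0 := by unfold hqGenocchi; simp
  rw [h0]
  simp only [mul_zero, zero_mul, add_zero]
  have hterm : ∀ i ∈ range (n+1),
      ((n+1).choose (i+1) : ℝ) * (qnum q a) ^ (((i+1:ℕ) : ℤ) - 1) *
        (qnum q b) ^ (n+1 - (i+1)) * hqGenocchi h (q ^ a) (i+1) ((b : ℝ) * x) *
        altPowSum (q ^ b) (h + ((i+1:ℕ) : ℤ) - 1) (n+1 - (i+1)) a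
      = ((n:ℝ)+1) * (1 + q^a) / (1-q)^n *
        ((n.choose i : ℝ) * (∑ k ∈ range (i+1), (i.choose k : ℝ) * gg q a b (h:ℝ) x k) *
        (∑ l ∈ range (n-i+1), ((n-i).choose l : ℝ) * (-1:ℝ)^l * ff q a b (h:ℝ) (i+l))) := by
    intro i hi
    rw [mem_range] at hi
    exact term_eq q hq0 hq1 h x n a b ha hb hao i (by omega)
  rw [sum_congr rfl hterm, ← Finset.mul_sum,
    lemB n (fun j => ff q a b (h:ℝ) j) (fun k => gg q a b (h:ℝ) x k)]
  simp only [Nat.add_sub_cancel]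
  push_cast
  ring

theorem statement16 (q : ℝ) (hq0 : 0 < q) (hq1 : q < 1) (h : ℤ) (hh : 1 ≤ h)
    (x : ℝ) (hx : 0 < x) (m : ℕ) (a b : ℕ) (ha : 0 < a) (hb : 0 < b)
    (hao : Odd a) (hbo : Odd b) :
    (1 + q ^ b) *
        ∑ i ∈ Finset.range (m + 1), (m.choose i : ℝ) * (qnum q a) ^ ((i : ℤ) - 1) *
          (qnum q b) ^ (m - i) * hqGenocchi h (q ^ a) i ((b : ℝ) * x) *
          altPowSum (q ^ b) (h + (i : ℤ) - 1) (m - i) a =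
      (1 + q ^ a) *
        ∑ i ∈ Finset.range (m + 1), (m.choose i : ℝ) * (qnum q b) ^ ((i : ℤ) - 1) *
          (qnum q a) ^ (m - i) * hqGenocchi h (q ^ b) i ((a : ℝ) * x) *
          altPowSum (q ^ a) (h + (i : ℤ) - 1) (m - i) b := by
  rw [oneSide q hq0 hq1 h x m a b ha hb hao, oneSide q hq0 hq1 h x m b a hb ha hbo]
  have hsum : (∑ k ∈ range m, ((m-1).choose k : ℝ) * gg q a b (h:ℝ) x k * ff q a b (h:ℝ) k)
      = ∑ k ∈ range m, ((m-1).choose k : ℝ) * gg q b a (h:ℝ) x k * ff q b a (h:ℝ) k := by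
    refine sum_congr rfl fun k _ => ?_
    unfold gg ff
    rw [show (a:ℝ)*(b:ℝ)*(k:ℝ)*x = (b:ℝ)*(a:ℝ)*(k:ℝ)*x by ring,
        show (a:ℝ)*(b:ℝ)*((h:ℝ)+(k:ℝ)) = (b:ℝ)*(a:ℝ)*((h:ℝ)+(k:ℝ)) by ring]
    ring
  rw [hsum]
  ring
end
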